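/- With λ_{d,κ,n} as defined via Gegenbauer polynomials, λ_{d,κ,κ} = 2^κ κ! (d/2−1)_κ / (d^κ (d−2)_κ), where (x)_κ denotes the rising factorial (Pochhammer symbol). -/

import Mathlib

open Polynomial

/-- The Gegenbauer (ultraspherical) polynomial `C_n^α`, defined by the standard
three-term recurrence `n C_n = 2(n+α-1) X C_{n-1} - (n+2α-2) C_{n-2}`. -/
noncomputable def gegenbauer (α : ℚ) : ℕ → Polynomial ℚ
  | 0 => 1
  | 1 => C (2 * α) * X
  | n + 2 =>
      C (2 * ((n : ℚ) + 1 + α) / ((n : ℚ) + 2)) * X * gegenbauer α (n + 1) -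
        C (((n : ℚ) + 2 * α) / ((n : ℚ) + 2)) * gegenbauer α n

/-- The eigenvalue `λ_{d,κ,n}`. -/
noncomputable def lam (d κ n : ℕ) : ℚ :=
  (1 / 2 ^ d) * ∑ ε : Fin d → ℤˣ,
    (∏ i ∈ Finset.univ.filter (fun i : Fin d => (i : ℕ) < κ), ((ε i : ℤ) : ℚ)) *
      ((gegenbauer ((d : ℚ) / 2 - 1) n).eval ((∑ i, ((ε i : ℤ) : ℚ)) / d) /
        (gegenbauer ((d : ℚ) / 2 - 1) n).eval 1)



namespace LamAux
open Polynomial Finset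


noncomputable def Dp (p : Polynomial ℚ) : Polynomial ℚ := p.comp (X + 1) - p.comp (X - 1)

lemma X_sub_one_eq : (X - 1 : Polynomial ℚ) = X + C (-1) := by
  simp [map_neg, sub_eq_add_neg]

lemma Dp_coeff_aux (p : Polynomial ℚ) (n m : ℕ) (h : p.natDegree ≤ n + 1) :
    (Dp p).coeff m =
      ∑ i ∈ range (n + 2),
        p.coeff i * ((i.choose m : ℚ) - (-1 : ℚ) ^ (i - m) * (i.choose m : ℚ)) := by
  conv_lhs => rw [Dp, p.as_sum_range' (n + 2) (by omega)]
  simp only [← coe_compRingHom_apply, map_sum]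
  rw [← Finset.sum_sub_distrib, finset_sum_coeff]
  refine Finset.sum_congr rfl fun i _ => ?_
  rw [coe_compRingHom_apply, coe_compRingHom_apply, monomial_comp, monomial_comp,
    X_sub_one_eq, coeff_sub, coeff_C_mul, coeff_C_mul, coeff_X_add_one_pow,
    coeff_X_add_C_pow]
  ring

lemma Dp_coeff (p : Polynomial ℚ) (n : ℕ) (h : p.natDegree ≤ n + 1) :
    (Dp p).coeff n = 2 * (n + 1 : ℚ) * p.coeff (n + 1) := by
  rw [Dp_coeff_aux p n n h, Finset.sum_eq_single (n + 1)]
  · simp [Nat.choose_succ_self_right]; ring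
  · intro i hi hne
    rcases lt_or_ge i n with h1 | h1
    · simp [Nat.choose_eq_zero_of_lt h1]
    · have : i = n := by simp at hi; omega
      subst this; simp
  · intro h; simp at h

lemma Dp_natDegree (p : Polynomial ℚ) (n : ℕ) (h : p.natDegree ≤ n + 1) :
    (Dp p).natDegree ≤ n := by
  rw [natDegree_le_iff_coeff_eq_zero]
  intro m hm
  rw [Dp_coeff_aux p n m h]
  refine Finset.sum_eq_zero fun i hi => ?_
  rcases lt_or_ge i m with h1 | h1
  · simp [Nat.choose_eq_zero_of_lt h1]
  · have : i = m := by simp at hi; omega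
    subst this; simp



noncomputable def Ssum (d κ : ℕ) (p : Polynomial ℚ) : ℚ :=
  ∑ ε : Fin d → ℤˣ,
    (∏ i ∈ Finset.univ.filter (fun i : Fin d => (i : ℕ) < κ), ((ε i : ℤ) : ℚ)) *
      p.eval (∑ i, ((ε i : ℤ) : ℚ))

lemma Ssum_zero (d : ℕ) (c : ℚ) : Ssum d 0 (C c) = 2 ^ d * c := by
  unfold Ssum
  have : ∀ ε : Fin d → ℤˣ,
      (∏ i ∈ Finset.univ.filter (fun i : Fin d => (i : ℕ) < 0), ((ε i : ℤ) : ℚ)) *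
        (C c).eval (∑ i, ((ε i : ℤ) : ℚ)) = c := by
    intro ε
    have : Finset.univ.filter (fun i : Fin d => (i : ℕ) < 0) = ∅ := by
      apply Finset.filter_false_of_mem; intro i _; omega
    simp [this]
  rw [Finset.sum_congr rfl fun ε _ => this ε, Finset.sum_const, Finset.card_univ]
  simp [Fintype.card_fun]

lemma Ssum_succ (d κ : ℕ) (p : Polynomial ℚ) :
    Ssum (d + 1) (κ + 1) p = Ssum d κ (Dp p) := by
  unfold Ssum
  rw [← (Fin.consEquiv (fun _ : Fin (d+1) => ℤˣ)).sum_comp, Fintype.sum_prod_type]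
  rw [Finset.sum_comm]
  refine Finset.sum_congr rfl fun ε _ => ?_
  have hprod : ∀ a : ℤˣ,
      (∏ i ∈ Finset.univ.filter (fun i : Fin (d+1) => (i : ℕ) < κ + 1),
        (((Fin.consEquiv (fun _ : Fin (d+1) => ℤˣ)) (a, ε)) i : ℤ) : ℚ) =
      (a : ℤ) * ∏ i ∈ Finset.univ.filter (fun i : Fin d => (i : ℕ) < κ), ((ε i : ℤ) : ℚ) := by
    intro a
    rw [Finset.prod_filter, Finset.prod_filter, Fin.prod_univ_succ]
    simp [Fin.consEquiv]
  have hsum : ∀ a : ℤˣ,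
      (∑ i, (((Fin.consEquiv (fun _ : Fin (d+1) => ℤˣ)) (a, ε)) i : ℤ) : ℚ) =
      (a : ℤ) + ∑ i, ((ε i : ℤ) : ℚ) := by
    intro a
    rw [Fin.sum_univ_succ]
    simp [Fin.consEquiv]
  rw [show (Finset.univ : Finset ℤˣ) = {1, -1} from rfl]
  rw [Finset.sum_insert (by decide), Finset.sum_singleton]
  rw [hprod, hprod, hsum, hsum]
  simp only [Dp, eval_sub, eval_comp, eval_add, eval_sub, eval_one, eval_X]
  push_cast
  ring


lemma comp_scale_coeff (c : ℚ) (p : Polynomial ℚ) (n : ℕ) :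
    (p.comp (C c * X)).coeff n = c ^ n * p.coeff n := by
  induction p using Polynomial.induction_on' with
  | add p q hp hq => simp [add_comp, hp, hq, mul_add]
  | monomial i a =>
    rw [monomial_comp, mul_pow, ← C_pow, ← mul_assoc, ← C_mul]
    simp only [coeff_C_mul, coeff_X_pow, coeff_monomial]
    split_ifs with h1 h2 h2
    · subst h1; ring
    · omega
    · omega
    · ring

lemma geg_natDegree_le (α : ℚ) : ∀ n, (gegenbauer α n).natDegree ≤ n := by
  intro n
  induction n using Nat.twoStepInduction with
  | zero => simp [gegenbauer]
  | one =>
    rw [show gegenbauer α 1 = C (2 * α) * X from rfl]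
    exact le_trans natDegree_mul_le (by simp only [natDegree_C, natDegree_X]; omega)
  | more n ih1 ih2 =>
    show (gegenbauer α (n+2)).natDegree ≤ n + 2
    rw [gegenbauer]
    refine le_trans (natDegree_sub_le _ _) (max_le ?_ ?_)
    · refine le_trans (natDegree_mul_le) ?_
      have h : (C (2 * ((n : ℚ) + 1 + α) / ((n : ℚ) + 2)) * X).natDegree ≤ 1 :=
        le_trans natDegree_mul_le (by simp)
      omega
    · refine le_trans (natDegree_mul_le) ?_
      simp only [natDegree_C, zero_add]
      omega

lemma geg_coeff_self (α : ℚ) : ∀ n, (gegenbauer α n).coeff n =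
    2 ^ n * (∏ i ∈ range n, (α + i)) / (Nat.factorial n : ℚ) := by
  intro n
  induction n using Nat.twoStepInduction with
  | zero => simp [gegenbauer]
  | one => simp [gegenbauer, coeff_C_mul, coeff_X, Nat.factorial]
  | more n ih1 ih2 =>
    show (gegenbauer α (n+2)).coeff (n+2) = _
    rw [gegenbauer, coeff_sub, mul_assoc, coeff_C_mul, coeff_C_mul, coeff_X_mul, ih2,
      coeff_eq_zero_of_natDegree_lt (lt_of_le_of_lt (geg_natDegree_le α n) (by omega))]
    simp only [Finset.prod_range_succ]
    have h2 : ((n : ℚ) + 2) ≠ 0 := by positivity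
    have hf : ((n + 1).factorial : ℚ) ≠ 0 := by exact_mod_cast (Nat.factorial_pos _).ne'
    have hf2 : (((n : ℕ) + 2).factorial : ℚ) ≠ 0 := by exact_mod_cast (Nat.factorial_pos _).ne'
    rw [show ((n:ℕ)+2).factorial = (n+2) * (n+1).factorial from rfl]
    push_cast
    field_simp
    ring

lemma geg_eval_one (α : ℚ) : ∀ n, (gegenbauer α n).eval 1 =
    (∏ i ∈ range n, (2 * α + i)) / (Nat.factorial n : ℚ) := by
  intro n
  induction n using Nat.twoStepInduction with
  | zero => simp [gegenbauer]
  | one => simp [gegenbauer, Nat.factorial]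
  | more n ih1 ih2 =>
    show (gegenbauer α (n+2)).eval 1 = _
    rw [gegenbauer]; simp only [eval_sub, eval_mul, eval_C, eval_X]; rw [ih1, ih2]
    simp only [Finset.prod_range_succ]
    have h2 : ((n : ℚ) + 2) ≠ 0 := by positivity
    have hf : ((n + 1).factorial : ℚ) ≠ 0 := by exact_mod_cast (Nat.factorial_pos _).ne'
    have hf0 : ((n).factorial : ℚ) ≠ 0 := by exact_mod_cast (Nat.factorial_pos _).ne'
    rw [show ((n:ℕ)+2).factorial = (n+2) * (n+1).factorial from rfl,
        show ((n:ℕ)+1).factorial = (n+1) * n.factorial from rfl]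
    push_cast
    field_simp
    ring

lemma Slem : ∀ (κ d : ℕ) (p : Polynomial ℚ), κ ≤ d → p.natDegree ≤ κ →
    Ssum d κ p = 2 ^ d * (Nat.factorial κ : ℚ) * p.coeff κ := by
  intro κ
  induction κ with
  | zero =>
    intro d p _ hp
    have hpc := Polynomial.eq_C_of_natDegree_le_zero hp
    rw [hpc, Ssum_zero]
    simp
  | succ κ ih =>
    intro d p hκ hp
    obtain ⟨d', rfl⟩ : ∃ d', d = d' + 1 := ⟨d - 1, by omega⟩
    rw [Ssum_succ, ih d' (Dp p) (by omega) (Dp_natDegree p κ hp), Dp_coeff p κ hp,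
      Nat.factorial_succ]
    push_cast
    ring

end LamAux

/-- `λ_{d,κ,κ} = 2^κ κ! (d/2-1)_κ / (d^κ (d-2)_κ)`, with rising factorials
`(x)_κ = x(x+1)⋯(x+κ-1)`. -/
theorem lam_kappa_kappa (d κ : ℕ) (hd : 3 ≤ d) (hκ : κ ≤ d) :
    lam d κ κ =
      2 ^ κ * (Nat.factorial κ : ℚ) *
          (∏ i ∈ Finset.range κ, ((d : ℚ) / 2 - 1 + i)) /
        ((d : ℚ) ^ κ * ∏ i ∈ Finset.range κ, ((d : ℚ) - 2 + i)) := by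
  classical
  have hd0 : ((d : ℚ)) ≠ 0 := by positivity
  set α : ℚ := (d : ℚ) / 2 - 1 with hα
  set G : Polynomial ℚ := gegenbauer α κ with hG
  set q : Polynomial ℚ := G.comp (C ((1 : ℚ) / d) * X) with hq
  have harg : ∀ s : ℚ, q.eval s = G.eval (s / d) := by
    intro s
    rw [hq, eval_comp]
    simp only [eval_mul, eval_C, eval_X]
    congr 1
    ring
  have hqdeg : q.natDegree ≤ κ := by
    refine le_trans natDegree_comp_le ?_
    have h1 : (C ((1 : ℚ) / d) * X).natDegree ≤ 1 :=
      le_trans natDegree_mul_le (by simp only [natDegree_C, natDegree_X]; omega)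
    have h2 := LamAux.geg_natDegree_le α κ
    calc G.natDegree * (C ((1 : ℚ) / d) * X).natDegree ≤ κ * 1 := Nat.mul_le_mul h2 h1
    _ = κ := by omega
  have hsum : lam d κ κ = (1 / 2 ^ d) * (LamAux.Ssum d κ q * (G.eval 1)⁻¹) := by
    rw [lam, LamAux.Ssum, Finset.sum_mul]
    congr 1
    refine Finset.sum_congr rfl fun ε _ => ?_
    rw [harg]
    ring
  rw [hsum, LamAux.Slem κ d q hκ hqdeg, hq, LamAux.comp_scale_coeff]
  rw [hG, LamAux.geg_coeff_self α κ, LamAux.geg_eval_one α κ]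
  have hprod : (∏ i ∈ Finset.range κ, (2 * α + (i : ℚ))) =
      ∏ i ∈ Finset.range κ, ((d : ℚ) - 2 + i) := by
    refine Finset.prod_congr rfl fun i _ => ?_
    rw [hα]; ring
  rw [hprod]
  have hf : ((Nat.factorial κ : ℚ)) ≠ 0 := by exact_mod_cast (Nat.factorial_pos _).ne'
  have hP2 : (∏ i ∈ Finset.range κ, ((d : ℚ) - 2 + i)) ≠ 0 := by
    refine ne_of_gt (Finset.prod_pos fun i _ => ?_)
    have h3 : (3 : ℚ) ≤ (d : ℚ) := by exact_mod_cast hd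
    have h0 : (0 : ℚ) ≤ (i : ℚ) := by positivity
    linarith
  have h2d : ((2 : ℚ) ^ d) ≠ 0 := by positivity
  field_simp
  ring_nf
  rw [← mul_pow, mul_inv_cancel₀ hd0, one_pow, one_mul]
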